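/- Let g, h ∈ ℝ^m have all coordinates nonzero with pairwise distinct ratios g_i/h_i, ordered so that g₁/h₁ < g₂/h₂ < ⋯ < g_m/h_m. For any sign vector S ∈ {−1,+1}^m, the span of g and h intersects the open orthant of S if and only if S or −S arises as the sign vector of u·g − v·h for some u/v lying strictly between two consecutive values g_i/h_i (or outside all of them), with v of appropriate sign; in particular, the number of such realizable sign vectors S is exactly 2m out of the 2^m possible. -/
import Mathlib

lemma stmt6_rsign_mul (a b : ℝ) : Real.sign (a * b) = Real.sign a * Real.sign b := by
  rcases lt_trichotomy a 0 with ha | ha | ha <;>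
    rcases lt_trichotomy b 0 with hb | hb | hb
  · rw [Real.sign_of_pos (mul_pos_of_neg_of_neg ha hb), Real.sign_of_neg ha,
      Real.sign_of_neg hb]; ring
  · simp [hb, Real.sign_zero]
  · rw [Real.sign_of_neg (mul_neg_of_neg_of_pos ha hb), Real.sign_of_neg ha,
      Real.sign_of_pos hb]; ring
  · simp [ha, Real.sign_zero]
  · simp [ha, Real.sign_zero]
  · simp [ha, Real.sign_zero]
  · rw [Real.sign_of_neg (mul_neg_of_pos_of_neg ha hb), Real.sign_of_pos ha,
      Real.sign_of_neg hb]; ring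
  · simp [hb, Real.sign_zero]
  · rw [Real.sign_of_pos (mul_pos ha hb), Real.sign_of_pos ha, Real.sign_of_pos hb]; ring

theorem stmt_6 {m : ℕ} (hm : 1 ≤ m) (g h : Fin m → ℝ)
    (hg : ∀ i, g i ≠ 0) (hh : ∀ i, h i ≠ 0)
    (hmono : StrictMono fun i => g i / h i) :
    (∀ S : Fin m → ℝ, (∀ i, S i = 1 ∨ S i = -1) →
      ((∃ u v : ℝ, ∀ i, Real.sign (u * g i + v * h i) = S i) ↔
        (∃ u v : ℝ, v ≠ 0 ∧ (∀ i, u / v ≠ g i / h i) ∧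
          ((∀ i, Real.sign (u * g i - v * h i) = S i) ∨
           (∀ i, Real.sign (u * g i - v * h i) = -S i))))) ∧
    Set.ncard {S : Fin m → ℝ | (∀ i, S i = 1 ∨ S i = -1) ∧
      ∃ u v : ℝ, ∀ i, Real.sign (u * g i + v * h i) = S i} = 2 * m := by
  set r : Fin m → ℝ := fun i => g i / h i with hr
  have hmono' : ∀ i j : Fin m, (i : ℕ) ≤ (j : ℕ) → r i ≤ r j := fun i j hij =>
    hmono.monotone hij
  have hsh : ∀ i, Real.sign (h i) ≠ 0 := fun i => by
    simp [Real.sign_eq_zero_iff, hh i]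
  -- the model sign vectors
  set T : ℕ → Fin m → ℝ := fun k i => (if (i : ℕ) < k then -1 else 1) * Real.sign (h i)
    with hT
  have hT1 : ∀ k i, T k i = 1 ∨ T k i = -1 := by
    intro k i
    rcases Real.sign_apply_eq_of_ne_zero (h i) (hh i) with hs | hs <;>
      by_cases hik : (i : ℕ) < k <;> simp [hT, hik, hs]
  -- classification for positive u
  have hpos : ∀ u v : ℝ, 0 < u → (∀ i, u * g i + v * h i ≠ 0) →
      ∃ k, k ≤ m ∧ ∀ i, Real.sign (u * g i + v * h i) = T k i := by
    intro u v hu hne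
    set c : ℝ := -v / u with hc
    set s : Finset (Fin m) := Finset.univ.filter (fun i => r i < c) with hs
    refine ⟨s.card, le_trans (Finset.card_filter_le _ _) (by simp), ?_⟩
    have hiff : ∀ i : Fin m, (i : ℕ) < s.card ↔ r i < c := by
      intro i
      constructor
      · intro hik
        by_contra hle
        push_neg at hle
        have hsub : s ⊆ Finset.Iio i := by
          intro j hj
          rw [hs, Finset.mem_filter] at hj
          rw [Finset.mem_Iio]
          by_contra hji
          push_neg at hji
          exact absurd (lt_of_lt_of_le hj.2 hle) (not_lt.mpr (hmono' i j hji))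
        have := Finset.card_le_card hsub
        rw [Fin.card_Iio] at this
        omega
      · intro hric
        have hsub : Finset.Iic i ⊆ s := by
          intro j hj
          rw [Finset.mem_Iic] at hj
          rw [hs, Finset.mem_filter]
          exact ⟨Finset.mem_univ _, lt_of_le_of_lt (hmono' j i hj) hric⟩
        have := Finset.card_le_card hsub
        rw [Fin.card_Iic] at this
        omega
    intro i
    have hfac : u * g i + v * h i = (u * h i) * (r i - c) := by
      rw [hr, hc]
      field_simp [hh i]
      ring
    have hrc : r i ≠ c := by
      intro hrceq
      apply hne i
      rw [hfac, hrceq, sub_self, mul_zero]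
    rw [hfac, stmt6_rsign_mul, stmt6_rsign_mul, Real.sign_of_pos hu]
    by_cases hik : (i : ℕ) < s.card
    · have hlt : r i < c := (hiff i).mp hik
      rw [Real.sign_of_neg (show r i - c < 0 by linarith), hT]
      simp only [hik, if_true, if_pos]
      ring
    · have hlt : c < r i := lt_of_le_of_ne (not_lt.mp fun hlt => hik ((hiff i).mpr hlt)) (Ne.symm hrc)
      rw [Real.sign_of_pos (show (0:ℝ) < r i - c by linarith), hT]
      simp only [hik, if_false]
      ring
  -- full classification
  have hclass : ∀ u v : ℝ, (∀ i, u * g i + v * h i ≠ 0) →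
      ∃ k, k ≤ m ∧ ((∀ i, Real.sign (u * g i + v * h i) = T k i) ∨
        (∀ i, Real.sign (u * g i + v * h i) = -T k i)) := by
    intro u v hne
    rcases lt_trichotomy u 0 with hu | hu | hu
    · have hne' : ∀ i, (-u) * g i + (-v) * h i ≠ 0 := by
        intro i heq
        apply hne i
        have : u * g i + v * h i = -((-u) * g i + (-v) * h i) := by ring
        rw [this, heq, neg_zero]
      obtain ⟨k, hk, hsig⟩ := hpos (-u) (-v) (by linarith) hne'
      refine ⟨k, hk, Or.inr fun i => ?_⟩
      have : u * g i + v * h i = -((-u) * g i + (-v) * h i) := by ring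
      rw [this, Real.sign_neg, hsig i]
    · subst hu
      refine ⟨0, Nat.zero_le m, ?_⟩
      have hv : v ≠ 0 := by
        intro hv0
        exact hne ⟨0, hm⟩ (by rw [hv0]; ring)
      rcases hv.lt_or_gt with hvn | hvp
      · refine Or.inr fun i => ?_
        rw [show 0 * g i + v * h i = v * h i by ring, stmt6_rsign_mul,
          Real.sign_of_neg hvn, hT]
        simp only [Nat.not_lt_zero, if_false]
        ring
      · refine Or.inl fun i => ?_
        rw [show 0 * g i + v * h i = v * h i by ring, stmt6_rsign_mul,
          Real.sign_of_pos hvp, hT]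
        simp only [Nat.not_lt_zero, if_false]
    · obtain ⟨k, hk, hsig⟩ := hpos u v hu hne
      exact ⟨k, hk, Or.inl hsig⟩
  -- realization: for every k ≤ m there is a good cut point c
  have hreal : ∀ k, k ≤ m → ∃ c : ℝ, c ≠ 0 ∧ (∀ i, c * r i ≠ 1) ∧
      (∀ i : Fin m, ((i : ℕ) < k → r i < c) ∧ (k ≤ (i : ℕ) → c < r i)) := by
    intro k hk
    set bad : Set ℝ := {0} ∪ ⋃ i : Fin m, {x | x * r i = 1} with hbad
    have hbadfin : bad.Finite := by
      refine (Set.finite_singleton 0).union (Set.finite_iUnion fun i => ?_)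
      apply Set.Subsingleton.finite
      intro x hx y hy
      have hri : r i ≠ 0 := by
        intro h0; rw [Set.mem_setOf_eq, h0, mul_zero] at hx; exact one_ne_zero hx.symm
      exact mul_right_cancel₀ hri (hx.trans hy.symm)
    have key : ∃ I : Set ℝ, I.Infinite ∧
        ∀ c ∈ I, ∀ i : Fin m, ((i : ℕ) < k → r i < c) ∧ (k ≤ (i : ℕ) → c < r i) := by
      rcases Nat.eq_zero_or_pos k with hk0 | hkpos
      · refine ⟨Set.Iio (r ⟨0, hm⟩), Set.Iio_infinite _, fun c hc i => ?_⟩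
        subst hk0
        refine ⟨fun hik => absurd hik (by omega), fun _ => ?_⟩
        exact lt_of_lt_of_le hc (hmono' ⟨0, hm⟩ i (Nat.zero_le _))
      · rcases eq_or_lt_of_le hk with hkm | hkm
        · refine ⟨Set.Ioi (r ⟨m - 1, by omega⟩), Set.Ioi_infinite _, fun c hc i => ?_⟩
          have hi := i.isLt
          refine ⟨fun _ => lt_of_le_of_lt (hmono' i ⟨m-1, by omega⟩ (by simp; omega)) hc,
            fun hik => absurd hik (by omega)⟩
        · refine ⟨Set.Ioo (r ⟨k - 1, by omega⟩) (r ⟨k, hkm⟩),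
            Set.Ioo_infinite (hmono (Fin.mk_lt_mk.mpr (by omega))), fun c hc i => ?_⟩
          constructor
          · intro hik
            exact lt_of_le_of_lt (hmono' i ⟨k-1, by omega⟩ (by simp; omega)) hc.1
          · intro hik
            exact lt_of_lt_of_le hc.2 (hmono' ⟨k, hkm⟩ i (by simpa using hik))
    obtain ⟨I, hI, hIprop⟩ := key
    obtain ⟨c, hcI, hcbad⟩ := (hI.diff hbadfin).nonempty
    refine ⟨c, ?_, ?_, hIprop c hcI⟩
    · intro h0; exact hcbad (Or.inl (by simp [h0]))
    · intro i hci; exact hcbad (Or.inr (Set.mem_iUnion.mpr ⟨i, hci⟩))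
  -- sign of g - c h for a good cut point
  have hcut : ∀ k c, (∀ i : Fin m, ((i : ℕ) < k → r i < c) ∧ (k ≤ (i : ℕ) → c < r i)) →
      ∀ i, Real.sign (g i - c * h i) = T k i := by
    intro k c hc i
    have hfac : g i - c * h i = h i * (r i - c) := by
      rw [hr, mul_sub, mul_comm (h i) (g i / h i), div_mul_cancel₀ _ (hh i)]
      ring
    rw [hfac, stmt6_rsign_mul, hT]
    by_cases hik : (i : ℕ) < k
    · rw [Real.sign_of_neg (show r i - c < 0 by have := (hc i).1 hik; linarith)]
      simp only [hik, if_true, if_pos]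
      ring
    · rw [Real.sign_of_pos (show (0:ℝ) < r i - c by have := (hc i).2 (not_lt.mp hik); linarith)]
      simp only [hik, if_false]
      ring
  constructor
  · -- Part 1
    intro S hS
    have hS0 : ∀ i, S i ≠ 0 := by
      intro i h0
      rcases hS i with h1 | h1 <;> rw [h0] at h1 <;> norm_num at h1
    constructor
    · rintro ⟨u, v, hsig⟩
      have hne : ∀ i, u * g i + v * h i ≠ 0 := by
        intro i h0
        apply hS0 i
        rw [← hsig i, h0, Real.sign_zero]
      obtain ⟨k, hk, hcase⟩ := hclass u v hne
      obtain ⟨c, hc0, hc1, hcprop⟩ := hreal k hk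
      refine ⟨1, c, hc0, ?_, ?_⟩
      · intro i heq
        apply hc1 i
        rw [show r i = g i / h i from rfl, ← heq]
        field_simp
      · have hsgn : ∀ i, Real.sign (1 * g i - c * h i) = T k i := by
          intro i
          rw [one_mul]
          exact hcut k c hcprop i
        rcases hcase with hcase | hcase
        · exact Or.inl fun i => by rw [hsgn i, ← hcase i, hsig i]
        · refine Or.inr fun i => ?_
          rw [hsgn i]
          have := hcase i
          rw [hsig i] at this
          linarith [this]
    · rintro ⟨u, v, hv, hquot, hcase | hcase⟩
      · refine ⟨u, -v, fun i => ?_⟩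
        rw [show u * g i + -v * h i = u * g i - v * h i by ring]
        exact hcase i
      · refine ⟨-u, v, fun i => ?_⟩
        rw [show -u * g i + v * h i = -(u * g i - v * h i) by ring, Real.sign_neg,
          hcase i, neg_neg]
  · -- Part 2
    set F : Fin m × Bool → (Fin m → ℝ) :=
      fun p i => (if p.2 then 1 else -1) * T (p.1 : ℕ) i with hF
    have hset : {S : Fin m → ℝ | (∀ i, S i = 1 ∨ S i = -1) ∧
        ∃ u v : ℝ, ∀ i, Real.sign (u * g i + v * h i) = S i} = Set.range F := by
      ext S
      simp only [Set.mem_setOf_eq, Set.mem_range]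
      constructor
      · rintro ⟨hS1, u, v, hsig⟩
        have hne : ∀ i, u * g i + v * h i ≠ 0 := by
          intro i h0
          rcases hS1 i with h1 | h1 <;>
            · rw [← hsig i, h0, Real.sign_zero] at h1; norm_num at h1
        obtain ⟨k, hk, hcase⟩ := hclass u v hne
        rcases eq_or_lt_of_le hk with hkm | hkm
        · -- k = m : T m = - T 0
          have hTm : ∀ i : Fin m, T k i = -T 0 i := by
            intro i
            rw [hT]
            simp [hkm, i.isLt]
          rcases hcase with hcase | hcase
          · refine ⟨(⟨0, hm⟩, false), funext fun i => ?_⟩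
            rw [hF]
            simp only [if_neg Bool.false_ne_true]
            rw [← hsig i, hcase i, hTm i]; simp
          · refine ⟨(⟨0, hm⟩, true), funext fun i => ?_⟩
            rw [hF]
            simp only [if_pos rfl]
            rw [← hsig i, hcase i, hTm i]; simp
        · rcases hcase with hcase | hcase
          · refine ⟨(⟨k, hkm⟩, true), funext fun i => ?_⟩
            rw [hF]
            simp only [if_pos rfl]
            rw [← hsig i, hcase i]; simp
          · refine ⟨(⟨k, hkm⟩, false), funext fun i => ?_⟩
            rw [hF]
            simp only [if_neg Bool.false_ne_true]
            rw [← hsig i, hcase i]; simp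
      · rintro ⟨⟨k, b⟩, rfl⟩
        constructor
        · intro i
          rcases hT1 (k : ℕ) i with h1 | h1 <;> cases b <;> simp [hF, h1]
        · obtain ⟨c, hc0, hc1, hcprop⟩ := hreal (k : ℕ) (le_of_lt k.isLt)
          cases b
          · refine ⟨-1, c, fun i => ?_⟩
            rw [show (-1 : ℝ) * g i + c * h i = -(g i - c * h i) by ring, Real.sign_neg,
              hcut (k : ℕ) c hcprop i, hF]
            simp
          · refine ⟨1, -c, fun i => ?_⟩
            rw [show (1 : ℝ) * g i + -c * h i = g i - c * h i by ring,
              hcut (k : ℕ) c hcprop i, hF]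
            simp
    have hFinj : Function.Injective F := by
      rintro ⟨k, b⟩ ⟨l, d⟩ heq
      have heval : ∀ i : Fin m, (if b then (1:ℝ) else -1) * (if (i:ℕ) < (k:ℕ) then (-1:ℝ) else 1)
          = (if d then (1:ℝ) else -1) * (if (i:ℕ) < (l:ℕ) then (-1:ℝ) else 1) := by
        intro i
        have := congrFun heq i
        rw [hF, hT] at this
        simp only at this
        have h2 : ((if b then (1:ℝ) else -1) * (if (i:ℕ) < (k:ℕ) then (-1:ℝ) else 1)) * Real.sign (h i)
            = ((if d then (1:ℝ) else -1) * (if (i:ℕ) < (l:ℕ) then (-1:ℝ) else 1)) * Real.sign (h i) := by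
          rw [mul_assoc, mul_assoc]; exact this
        exact mul_right_cancel₀ (hsh i) h2
      have hbd : b = d := by
        by_contra hbd
        have h1 := heval k
        have h2 := heval l
        rw [if_neg (lt_irrefl _)] at h1
        rw [if_neg (lt_irrefl _)] at h2
        have hlk : (l : ℕ) < (k : ℕ) := by
          by_contra hc
          rw [if_neg hc] at h2
          cases b <;> cases d <;> simp at hbd h2 <;> norm_num at h2
        have hkl : (k : ℕ) < (l : ℕ) := by
          by_contra hc
          rw [if_neg hc] at h1
          cases b <;> cases d <;> simp at hbd h1 <;> norm_num at h1
        omega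
      subst hbd
      have hkl : k = l := by
        by_contra hkl
        rcases lt_or_gt_of_ne (fun hv => hkl (Fin.val_injective hv) : (k:ℕ) ≠ (l:ℕ)) with hlt | hlt
        · have h1 := heval k
          rw [if_neg (lt_irrefl _), if_pos hlt] at h1
          cases b <;> norm_num at h1
        · have h1 := heval l
          rw [if_neg (lt_irrefl _), if_pos hlt] at h1
          cases b <;> norm_num at h1
      rw [hkl]
    rw [hset, ← Set.image_univ, Set.ncard_image_of_injective _ hFinj, Set.ncard_univ,
      Nat.card_eq_fintype_card]
    simp [Fintype.card_prod, mul_comm]
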